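/- Let G be a nut graph of odd order n and let x be a nonzero kernel vector of the adjacency matrix of G. Then Aut(G) contains no sign-reversing automorphism (no automorphism α with x^α = −x), and the entries of x are constant within each vertex orbit of G. -/

import Mathlib

namespace NutPaper

open Matrix

variable {V : Type*}

open scoped Classical in
/-- The real adjacency matrix of a simple graph. -/
noncomputable def adjMat (G : SimpleGraph V) : Matrix V V ℝ :=
  Matrix.of fun u v => if G.Adj u v then (1 : ℝ) else 0

/-- A nut graph: the adjacency matrix has nullity exactly one, and every
nonzero kernel vector has all entries nonzero. -/
def IsNutGraph [Fintype V] (G : SimpleGraph V) : Prop :=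
  Module.finrank ℝ (LinearMap.ker (Matrix.mulVecLin (adjMat G))) = 1 ∧
  ∀ x : V → ℝ, adjMat G *ᵥ x = 0 → x ≠ 0 → ∀ v, x v ≠ 0

/-- The orbit of a vertex under the full automorphism group. -/
def vertexOrbit (G : SimpleGraph V) (v : V) : Set V :=
  {u | ∃ α : G ≃g G, α v = u}

/-- The set of vertex orbits. -/
def vertexOrbits (G : SimpleGraph V) : Set (Set V) :=
  Set.range (vertexOrbit G)

/-- The number of vertex orbits. -/
noncomputable def numVertexOrbits (G : SimpleGraph V) : ℕ :=
  Nat.card (vertexOrbits G)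

/-- The orbit of an edge under the full automorphism group. -/
def edgeOrbit (G : SimpleGraph V) (e : Sym2 V) : Set (Sym2 V) :=
  {f | ∃ α : G ≃g G, Sym2.map (⇑α) e = f}

/-- The set of edge orbits. -/
def edgeOrbits (G : SimpleGraph V) : Set (Set (Sym2 V)) :=
  edgeOrbit G '' G.edgeSet

/-- The number of edge orbits. -/
noncomputable def numEdgeOrbits (G : SimpleGraph V) : ℕ :=
  Nat.card (edgeOrbits G)


private lemma adjMat_comp {V : Type*} [Fintype V] (G : SimpleGraph V) (α : G ≃g G)
    (x : V → ℝ) (hker : adjMat G *ᵥ x = 0) :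
    adjMat G *ᵥ (fun v => x (α v)) = 0 := by
  funext u
  have h2 : ∑ v, adjMat G u v * x (α v) = ∑ w, adjMat G (α u) w * x w := by
    refine Fintype.sum_equiv α.toEquiv _ _ fun v => ?_
    show adjMat G u v * x (α v) = adjMat G (α u) (α v) * x (α v)
    congr 1
    simp only [adjMat, Matrix.of_apply]
    by_cases h : G.Adj u v
    · rw [if_pos h, if_pos (α.map_adj_iff.mpr h)]
    · rw [if_neg h, if_neg (fun hc => h (α.map_adj_iff.mp hc))]
  have : (adjMat G *ᵥ fun v => x (α v)) u = (adjMat G *ᵥ x) (α u) := h2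
  rw [this, hker]
  rfl

private lemma no_sign_rev {V : Type*} [Fintype V] (G : SimpleGraph V)
    (hodd : Odd (Fintype.card V)) (x : V → ℝ) (hall : ∀ v, x v ≠ 0) :
    ¬ ∃ α : G ≃g G, ∀ v : V, x (α v) = -x v := by
  classical
  rintro ⟨α, hα⟩
  have hsplit := Finset.card_filter_add_card_filter_not
    (s := (Finset.univ : Finset V)) (p := fun v => 0 < x v)
  have hcardeq : (Finset.univ.filter fun v => ¬ 0 < x v).card =
      (Finset.univ.filter fun v => 0 < x v).card := by
    refine Finset.card_bij (fun a _ => α a) ?_ ?_ ?_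
    · intro a ha
      simp only [Finset.mem_filter, Finset.mem_univ, true_and] at ha ⊢
      have h1 : x a < 0 := lt_of_le_of_ne (not_lt.mp ha) (hall a)
      have h2 := hα a
      linarith
    · intro a _ b _ h
      exact α.injective h
    · intro b hb
      simp only [Finset.mem_filter, Finset.mem_univ, true_and] at hb
      refine ⟨α.symm b, ?_, by simp⟩
      simp only [Finset.mem_filter, Finset.mem_univ, true_and]
      have h2 : x (α (α.symm b)) = -x (α.symm b) := hα _
      simp only [RelIso.apply_symm_apply] at h2
      intro hc; linarith
  have heven : Even (Fintype.card V) := by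
    rw [← Finset.card_univ, ← hsplit, hcardeq]
    exact ⟨_, rfl⟩
  exact (Nat.not_even_iff_odd.mpr hodd) heven

/-- A nut graph of odd order has no sign-reversing
automorphism, and the kernel-vector entries are constant on each vertex
orbit. -/
theorem nut_oddOrder_no_signReversing {V : Type*} [Fintype V]
    (G : SimpleGraph V) (hG : IsNutGraph G)
    (hodd : Odd (Fintype.card V))
    (x : V → ℝ) (hker : adjMat G *ᵥ x = 0) (hx : x ≠ 0) :
    (¬ ∃ α : G ≃g G, ∀ v : V, x (α v) = -x v) ∧
    (∀ u v : V, (∃ α : G ≃g G, α u = v) → x u = x v) := by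
  have hall : ∀ v, x v ≠ 0 := hG.2 x hker hx
  have h1 := no_sign_rev G hodd x hall
  refine ⟨h1, ?_⟩
  rintro u v ⟨α, rfl⟩
  set K := LinearMap.ker (Matrix.mulVecLin (adjMat G)) with hK
  have hxK : x ∈ K := by simpa [hK, Matrix.mulVecLin_apply] using hker
  have hyK : (fun w => x (α w)) ∈ K := by
    simpa [hK, Matrix.mulVecLin_apply] using adjMat_comp G α x hker
  have hxne : (⟨x, hxK⟩ : K) ≠ 0 := fun h => hx (congrArg Subtype.val h)
  obtain ⟨c, hc⟩ := (finrank_eq_one_iff_of_nonzero' (⟨x, hxK⟩ : K) hxne).mp hG.1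
    ⟨fun w => x (α w), hyK⟩
  have hc' : ∀ w, c * x w = x (α w) := fun w =>
    congrFun (congrArg Subtype.val hc) w
  have hsum : ∑ w, x (α w) ^ 2 = ∑ w, x w ^ 2 :=
    Fintype.sum_equiv α.toEquiv (fun w => x (α w) ^ 2) (fun w => x w ^ 2)
      (fun w => by show x (α w) ^ 2 = x (α w) ^ 2; rfl)
  have hv0 : ∃ v, x v ≠ 0 := Function.ne_iff.mp hx
  obtain ⟨v0, hv0⟩ := hv0
  have hSpos : 0 < ∑ w, x w ^ 2 := by
    refine Finset.sum_pos' (fun w _ => sq_nonneg _) ⟨v0, Finset.mem_univ v0, ?_⟩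
    positivity
  have hc2 : ∑ w, x (α w) ^ 2 = c ^ 2 * ∑ w, x w ^ 2 := by
    rw [Finset.mul_sum]
    refine Finset.sum_congr rfl fun w _ => ?_
    rw [← hc' w]; ring
  have hcsq : c ^ 2 = 1 :=
    mul_right_cancel₀ (ne_of_gt hSpos) ((hc2.symm.trans hsum).trans (one_mul _).symm)
  have hc1 : c = 1 ∨ c = -1 := by
    have hcc : c * c = 1 := by nlinarith [hcsq]
    exact mul_self_eq_one_iff.mp hcc
  rcases hc1 with h | h
  · rw [← hc' u, h, one_mul]
  · exact absurd ⟨α, fun w => by rw [← hc' w, h]; ring⟩ h1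


end NutPaper
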